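/- Let R be a finite commutative local ring in which 2 is invertible. Then the quaternion ring H(R) is isomorphic to the matrix ring M₂(R). -/

import Mathlib

open Quaternion

private theorem quaternion_aux_sq_add_sq (R : Type*) [CommRing R] [Finite R] [IsLocalRing R]
    (h2 : IsUnit (2 : R)) : ∃ a b : R, a ^ 2 + b ^ 2 = -1 := by
  open IsLocalRing in
  -- residue field solution with x ≠ 0
  obtain ⟨x, y, hxy, hx⟩ : ∃ x y : ResidueField R, x ^ 2 + y ^ 2 = -1 ∧ x ≠ 0 := by
    set F := ResidueField R
    have : Finite F := Quotient.finite _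
    have : Fintype F := Fintype.ofFinite F
    have h2F : (2 : F) ≠ 0 := by
      have h := (h2.map (residue R)).ne_zero
      rwa [map_ofNat] at h
    have hchar : ringChar F ≠ 2 := by
      intro h
      have : CharP F 2 := ringChar.of_eq h
      exact h2F (by exact_mod_cast CharP.cast_eq_zero F 2)
    obtain ⟨x, y, hxy⟩ := FiniteField.exists_root_sum_quadratic
      (f := (Polynomial.X ^ 2 : (Polynomial F))) (g := Polynomial.X ^ 2 + Polynomial.C 1)
      (Polynomial.degree_X_pow 2) (by exact_mod_cast Polynomial.degree_X_pow_add_C (n := 2) (by norm_num) (1:F))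
      (FiniteField.odd_card_of_char_ne_two hchar)
    simp only [Polynomial.eval_add, Polynomial.eval_pow, Polynomial.eval_X,
      Polynomial.eval_C] at hxy
    have hxy' : x ^ 2 + y ^ 2 = -1 := by linear_combination hxy
    by_cases hx : x = 0
    · refine ⟨y, x, by linear_combination hxy', fun hy => ?_⟩
      rw [hx, hy] at hxy'
      simp at hxy'
    · exact ⟨x, y, hxy', hx⟩
  -- lift to R
  obtain ⟨a₀, ha₀⟩ := residue_surjective (R := R) x
  obtain ⟨b₀, hb₀⟩ := residue_surjective (R := R) y
  have haunit : IsUnit a₀ := by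
    by_contra h
    exact hx (by rw [← ha₀]; exact Ideal.Quotient.eq_zero_iff_mem.2 ((mem_maximalIdeal a₀).2 h))
  have hmem : a₀ ^ 2 + b₀ ^ 2 + 1 ∈ maximalIdeal R := by
    have : residue R (a₀ ^ 2 + b₀ ^ 2 + 1) = 0 := by
      rw [map_add, map_add, map_pow, map_pow, ha₀, hb₀, map_one]
      linear_combination hxy
    exact Ideal.Quotient.eq_zero_iff_mem.1 this
  -- nilpotency of the maximal ideal
  obtain ⟨N, hN⟩ : IsNilpotent (maximalIdeal R) := by
    have h := IsArtinianRing.isNilpotent_jacobson_bot (R := R)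
    rwa [jacobson_eq_maximalIdeal ⊥ bot_ne_top] at h
  -- Hensel-style induction
  have step : ∀ n : ℕ, ∃ a b : R, IsUnit a ∧ a ^ 2 + b ^ 2 + 1 ∈ (maximalIdeal R) ^ (2 ^ n) := by
    intro n
    induction n with
    | zero => exact ⟨a₀, b₀, haunit, by simpa using hmem⟩
    | succ n ih =>
      obtain ⟨a, b, ha, hm⟩ := ih
      set e := a ^ 2 + b ^ 2 + 1 with he
      set w : Rˣ := h2.unit * ha.unit with hwdef
      have hw : (w : R) = 2 * a := by rw [hwdef, Units.val_mul, IsUnit.unit_spec, IsUnit.unit_spec]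
      set c : R := ((w⁻¹ : Rˣ) : R) with hcdef
      have hinv : 2 * a * c = 1 := by rw [← hw, hcdef, Units.mul_inv]
      refine ⟨a - c * e, b, ?_, ?_⟩
      · by_contra h
        have hmem1 : a - c * e ∈ maximalIdeal R := (mem_maximalIdeal _).2 h
        have hce : c * e ∈ maximalIdeal R :=
          Ideal.mul_mem_left _ _ (Ideal.pow_le_self (Nat.two_pow_pos n).ne' hm)
        have : a ∈ maximalIdeal R := by
          have := add_mem hmem1 hce
          rwa [sub_add_cancel] at this
        exact mem_nonunits_iff.1 ((mem_maximalIdeal a).1 this) ha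
      · have key : (a - c * e) ^ 2 + b ^ 2 + 1 = e - (2 * a * c) * e + c ^ 2 * e ^ 2 := by
          rw [he]; ring
        rw [key, hinv, one_mul, sub_self, zero_add]
        have : e ^ 2 ∈ ((maximalIdeal R) ^ (2 ^ n)) ^ 2 := Ideal.pow_mem_pow hm 2
        have h22 : (maximalIdeal R ^ 2 ^ n) ^ 2 = maximalIdeal R ^ 2 ^ (n + 1) := by
          rw [← pow_mul, ← pow_succ]
        exact h22 ▸ Ideal.mul_mem_left _ _ this
  obtain ⟨a, b, ha, hm⟩ := step N
  have hle : (maximalIdeal R) ^ (2 ^ N) ≤ (maximalIdeal R) ^ N :=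
    Ideal.pow_le_pow_right (Nat.le_of_lt (Nat.lt_two_pow_self (n := N)))
  have : a ^ 2 + b ^ 2 + 1 = 0 := by
    have := hle hm
    rw [hN] at this
    simpa using this
  exact ⟨a, b, by linear_combination this⟩

/-- If `2` is invertible in a finite commutative local ring `R`, then the quaternion ring
`H(R)` is isomorphic to the ring of 2×2 matrices over `R`. -/
theorem quaternion_iso_matrix_of_two_unit (R : Type*) [CommRing R] [Finite R]
    [IsLocalRing R] (h2 : IsUnit (2 : R)) :
    Nonempty (ℍ[R] ≃+* Matrix (Fin 2) (Fin 2) R) := by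
  obtain ⟨a, b, hab⟩ := quaternion_aux_sq_add_sq R h2
  obtain ⟨c, hc⟩ : ∃ c : R, 2 * c = 1 := ⟨↑h2.unit⁻¹, by simp⟩
  let Q : QuaternionAlgebra.Basis (Matrix (Fin 2) (Fin 2) R) (-1 : R) (0 : R) (-1 : R) :=
    { i := !![a, b; b, -a]
      j := !![0, 1; -1, 0]
      k := !![-b, a; a, b]
      i_mul_i := by
        ext i j
        fin_cases i <;> fin_cases j <;>
          simp [Matrix.mul_fin_two, Matrix.one_fin_two] <;>
          first | ring1 | linear_combination hab
      j_mul_j := by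
        ext i j
        fin_cases i <;> fin_cases j <;>
          simp [Matrix.mul_fin_two, Matrix.one_fin_two]
      i_mul_j := by
        ext i j
        fin_cases i <;> fin_cases j <;> simp [Matrix.mul_fin_two]
      j_mul_i := by
        ext i j
        fin_cases i <;> fin_cases j <;> simp [Matrix.mul_fin_two] }
  let f := Q.liftHom
  have hf : ∀ q : ℍ[R], f q = algebraMap R _ q.re + q.imI • Q.i + q.imJ • Q.j + q.imK • Q.k :=
    fun q => rfl
  have hinj : Function.Injective f := by
    rw [injective_iff_map_eq_zero]
    rintro ⟨x, y, z, w⟩ hq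
    replace hq := (hf _).symm.trans hq
    have h00 := congrFun (congrFun hq 0) 0
    have h01 := congrFun (congrFun hq 0) 1
    have h10 := congrFun (congrFun hq 1) 0
    have h11 := congrFun (congrFun hq 1) 1
    simp [Q, Matrix.algebraMap_matrix_apply] at h00 h01 h10 h11
    have hx : x = 0 := by linear_combination c * h00 + c * h11 - x * hc
    have hz : z = 0 := by linear_combination c * h01 - c * h10 - z * hc
    have hy : y = 0 := by
      linear_combination (-a*c) * h00 + (a*c) * h11 + (-b*c) * h01 + (-b*c) * h10
        + (2*c*y) * hab + (-y) * hc
    have hw : w = 0 := by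
      linear_combination (b*c) * h00 + (-b*c) * h11 + (-a*c) * h01 + (-a*c) * h10
        + (2*c*w) * hab + (-w) * hc
    ext <;> simp [hx, hy, hz, hw]
  have hsurj : Function.Surjective f := by
    intro M
    refine ⟨⟨c * (M 0 0 + M 1 1), -(a * (c * (M 0 0 - M 1 1)) + b * (c * (M 0 1 + M 1 0))),
      c * (M 0 1 - M 1 0), b * (c * (M 0 0 - M 1 1)) - a * (c * (M 0 1 + M 1 0))⟩, ?_⟩
    refine (hf _).trans ?_
    ext i j
    fin_cases i <;> fin_cases j <;>
      simp [Q, Matrix.algebraMap_matrix_apply, -map_mul, -map_add, -map_sub]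
    · linear_combination (-(c * (M 0 0 - M 1 1))) * hab + (M 0 0) * hc
    · linear_combination (-(c * (M 0 1 + M 1 0))) * hab + (M 0 1) * hc
    · linear_combination (-(c * (M 0 1 + M 1 0))) * hab + (M 1 0) * hc
    · linear_combination (c * (M 0 0 - M 1 1)) * hab + (M 1 1) * hc
  exact ⟨(AlgEquiv.ofBijective f ⟨hinj, hsurj⟩).toRingEquiv⟩
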